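/- For all natural numbers m, n, every positive integer N, and every t ∈ [1/(N·2ⁿ + 2), 1/(N·2ⁿ + 2 − 2ⁿ)], one has g₁^[m]( ((N·2^{m+n} + 2^{m+1} + 2ⁿ)·t − 2^m) / ((N·2^{m+n} + 2^{m+1} + 2^{n+1})·t − 2^m) ) = g₂^[N](g₁^[n](t)). (Equivalently, the element g₁^{−m} g₂^{N} g₁^{n} acts on this interval by t ↦ ((N·2^{m+n}+2^{m+1}+2ⁿ)t − 2^m)/((N·2^{m+n}+2^{m+1}+2^{n+1})t − 2^m).) -/

import Mathlib

/-- The element `g₁` of the Lodha–Moore group as a piecewise fractional linear map. -/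
noncomputable def g₁ (t : ℝ) : ℝ :=
  if t ≤ 0 then t
  else if t ≤ 1 / 2 then 2 * t / (2 * t + 1)
  else if t ≤ 1 then 1 / (3 - 2 * t)
  else t

/-- The element `g₂` of the Lodha–Moore group as a piecewise fractional linear map. -/
noncomputable def g₂ (t : ℝ) : ℝ :=
  if t ≤ 0 then t
  else if t ≤ 1 / 3 then t / (1 - t)
  else if t ≤ 1 / 2 then (4 * t - 1) / (5 * t - 1)
  else if t ≤ 1 then 1 / (2 - t)
  else t

lemma g₁_low {t : ℝ} (h0 : 0 < t) (h1 : t ≤ 1/2) : g₁ t = 2 * t / (2 * t + 1) := by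
  unfold g₁
  rw [if_neg (by linarith), if_pos (by linarith)]

lemma g₁_high {t : ℝ} (h0 : 1/2 ≤ t) (h1 : t ≤ 1) : g₁ t = 1 / (3 - 2 * t) := by
  by_cases h : t ≤ 1/2
  · have : t = 1/2 := le_antisymm h h0
    subst this
    unfold g₁
    norm_num
  · unfold g₁
    rw [if_neg (by linarith), if_neg h, if_pos h1]

lemma g₁_iter_low (n : ℕ) : ∀ t : ℝ, 0 < t → t ≤ 1/2 →
    g₁^[n] t = 2^n * t / (2 * (2^n - 1) * t + 1) := by
  induction n with
  | zero => intro t h0 h1; simp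
  | succ n ih =>
    intro t h0 h1
    have h2n : (1:ℝ) ≤ 2^n := one_le_pow₀ (by norm_num)
    have hF : 0 < 2 * ((2:ℝ)^n - 1) * t + 1 := by nlinarith
    have hs0 : 0 < 2^n * t / (2 * ((2:ℝ)^n - 1) * t + 1) := by positivity
    have hs1 : 2^n * t / (2 * ((2:ℝ)^n - 1) * t + 1) ≤ 1/2 := by
      rw [div_le_div_iff₀ hF (by norm_num)]
      nlinarith
    rw [Function.iterate_succ_apply', ih t h0 h1, g₁_low hs0 hs1]
    have h2s : 0 < 2 * (2^n * t / (2 * ((2:ℝ)^n - 1) * t + 1)) + 1 := by linarith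
    have hF' : 0 < 2 * ((2:ℝ)^(n+1) - 1) * t + 1 := by
      have e : (2:ℝ)^(n+1) = 2 * 2^n := by ring
      nlinarith
    rw [div_eq_div_iff h2s.ne' hF'.ne']
    have hF0 : 2 * t * ((2:ℝ)^n - 1) + 1 ≠ 0 := by have := hF.ne'; ring_nf at this ⊢; exact this
    field_simp
    ring

lemma g₂_iter (N : ℕ) (hN : 1 ≤ N) : ∀ s : ℝ,
    1 / ((N:ℝ) + 2) ≤ s → s ≤ 1 / ((N:ℝ) + 1) →
    g₂^[N] s = (((N:ℝ) + 3) * s - 1) / (((N:ℝ) + 4) * s - 1) := by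
  induction N with
  | zero => omega
  | succ N ih =>
    intro s hlo shi
    by_cases hN1 : N = 0
    · subst hN1
      norm_num at hlo shi ⊢
      by_cases h13 : s ≤ 1/3
      · have : s = 1/3 := le_antisymm h13 hlo
        subst this
        unfold g₂
        norm_num
      · unfold g₂
        rw [if_neg (by linarith), if_neg h13, if_pos (by linarith : s ≤ 1/2)]
    · have hN' : 1 ≤ N := Nat.one_le_iff_ne_zero.mpr hN1
      have hNr : (1:ℝ) ≤ N := by exact_mod_cast hN'
      push_cast at hlo shi ⊢
      have hs0 : 0 < s := lt_of_lt_of_le (by positivity) hlo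
      have hs13 : s ≤ 1/3 := le_trans shi (by rw [div_le_div_iff₀ (by linarith) (by norm_num)]; linarith)
      have h1s : 0 < 1 - s := by linarith
      have hg : g₂ s = s / (1 - s) := by
        unfold g₂
        rw [if_neg (by linarith), if_pos hs13]
      -- bounds on u = s/(1-s)
      have hlo' : 1 ≤ ((N:ℝ) + 3) * s := by
        rw [div_le_iff₀ (by positivity)] at hlo
        linarith
      have hhi' : ((N:ℝ) + 2) * s ≤ 1 := by
        rw [le_div_iff₀ (by positivity)] at shi
        linarith
      have hulo : 1 / ((N:ℝ) + 2) ≤ s / (1 - s) := by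
        rw [div_le_div_iff₀ (by positivity) h1s]
        nlinarith
      have huhi : s / (1 - s) ≤ 1 / ((N:ℝ) + 1) := by
        rw [div_le_div_iff₀ h1s (by positivity)]
        nlinarith
      rw [Function.iterate_succ_apply, hg, ih hN' _ hulo huhi]
      have hd1 : ((N:ℝ) + 4) * (s / (1 - s)) - 1 > 0 := by
        rw [gt_iff_lt, sub_pos, ← mul_div_assoc, one_lt_div h1s]
        nlinarith
      have hd2 : ((N:ℝ) + 5) * s - 1 > 0 := by nlinarith
      rw [div_eq_div_iff (by linarith) (by linarith)]
      field_simp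
      ring

lemma g₁_iter_high (m : ℕ) : ∀ x : ℝ, 1/2 ≤ x → x ≤ 1 →
    g₁^[m] x = ((2 - 2^m) * x + 2^m - 1) / ((2 - 2^(m+1)) * x + 2^(m+1) - 1) := by
  induction m with
  | zero => intro x h0 h1; norm_num
  | succ m ih =>
    intro x h0 h1
    have h2m : (1:ℝ) ≤ 2^m := one_le_pow₀ (by norm_num)
    have hD : 0 < (2 - 2^(m+1)) * x + 2^(m+1) - 1 := by
      have : (2:ℝ)^(m+1) = 2 * 2^m := by ring
      nlinarith
    set y := ((2 - (2:ℝ)^m) * x + 2^m - 1) / ((2 - 2^(m+1)) * x + 2^(m+1) - 1) with hy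
    have hy0 : 1/2 ≤ y := by
      rw [hy, le_div_iff₀ hD]
      have : (2:ℝ)^(m+1) = 2 * 2^m := by ring
      nlinarith
    have hy1 : y ≤ 1 := by
      rw [hy, div_le_one hD]
      have : (2:ℝ)^(m+1) = 2 * 2^m := by ring
      nlinarith
    rw [Function.iterate_succ_apply', ih x h0 h1, ← hy, g₁_high hy0 hy1]
    have h3 : 0 < 3 - 2 * y := by linarith
    have hD' : 0 < (2 - (2:ℝ)^(m+1+1)) * x + 2^(m+1+1) - 1 := by
      have : (2:ℝ)^(m+1+1) = 4 * 2^m := by ring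
      nlinarith
    rw [hy, div_eq_div_iff (by nlinarith) (by linarith)]
    have hD0 : x * (2 - (2:ℝ) ^ (m + 1)) + 2 ^ (m + 1) - 1 ≠ 0 := by
      have := hD.ne'; ring_nf at this ⊢; exact this
    field_simp
    ring

set_option maxHeartbeats 2000000 in
/-- The element `g₁⁻ᵐ g₂ᴺ g₁ⁿ` acts on `[1/(N·2ⁿ + 2), 1/(N·2ⁿ + 2 − 2ⁿ)]` by
`t ↦ ((N·2^(m+n) + 2^(m+1) + 2ⁿ)t − 2^m) / ((N·2^(m+n) + 2^(m+1) + 2^(n+1))t − 2^m)`. -/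
theorem normal_form_action₂ (m n : ℕ) (N : ℕ) (hN : 0 < N) (t : ℝ)
    (ht : t ∈ Set.Icc (1 / ((N : ℝ) * 2 ^ n + 2)) (1 / ((N : ℝ) * 2 ^ n + 2 - 2 ^ n))) :
    g₁^[m] ((((N : ℝ) * 2 ^ (m + n) + 2 ^ (m + 1) + 2 ^ n) * t - 2 ^ m)
        / (((N : ℝ) * 2 ^ (m + n) + 2 ^ (m + 1) + 2 ^ (n + 1)) * t - 2 ^ m))
      = g₂^[N] (g₁^[n] t) := by
  obtain ⟨h1, h2⟩ := ht
  have hNr : (1:ℝ) ≤ N := by exact_mod_cast hN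
  have h2n : (1:ℝ) ≤ 2^n := one_le_pow₀ (by norm_num)
  have h2m : (1:ℝ) ≤ 2^m := one_le_pow₀ (by norm_num)
  have hd1 : (0:ℝ) < (N:ℝ) * 2^n + 2 := by positivity
  have hd2 : (0:ℝ) < (N:ℝ) * 2^n + 2 - 2^n := by nlinarith
  have ht0 : 0 < t := lt_of_lt_of_le (by positivity) h1
  rw [div_le_iff₀ hd1] at h1
  rw [le_div_iff₀ hd2] at h2
  have ht12 : t ≤ 1/2 := by nlinarith
  -- s = g₁^[n] t
  have hF : 0 < 2 * ((2:ℝ)^n - 1) * t + 1 := by nlinarith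
  set s := 2^n * t / (2 * ((2:ℝ)^n - 1) * t + 1) with hs
  have hsn : g₁^[n] t = s := g₁_iter_low n t ht0 ht12
  have hslo : 1 / ((N:ℝ) + 2) ≤ s := by
    rw [hs, div_le_div_iff₀ (by positivity) hF]
    nlinarith
  have hshi : s ≤ 1 / ((N:ℝ) + 1) := by
    rw [hs, div_le_div_iff₀ hF (by positivity)]
    nlinarith
  rw [hsn, g₂_iter N hN s hslo hshi]
  -- x
  have hpow : (2:ℝ)^(m+n) = 2^m * 2^n := pow_add 2 m n
  have hQ : 0 < ((N:ℝ) * 2^(m+n) + 2^(m+1) + 2^(n+1)) * t - 2^m := by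
    rw [hpow]
    have h1' : 2^m * 1 ≤ 2^m * ((N:ℝ) * 2^n * t + 2 * t) := by
      apply mul_le_mul_of_nonneg_left _ (by positivity)
      nlinarith
    have : (2:ℝ)^(m+1) = 2 * 2^m := by ring
    have : (2:ℝ)^(n+1) = 2 * 2^n := by ring
    nlinarith [mul_pos (show (0:ℝ) < 2^n by positivity) ht0]
  set x := (((N:ℝ) * 2^(m+n) + 2^(m+1) + 2^n) * t - 2^m) /
      (((N:ℝ) * 2^(m+n) + 2^(m+1) + 2^(n+1)) * t - 2^m) with hx
  have hxlo : 1/2 ≤ x := by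
    rw [hx, le_div_iff₀ hQ, hpow]
    have : (2:ℝ)^(m+1) = 2 * 2^m := by ring
    have : (2:ℝ)^(n+1) = 2 * 2^n := by ring
    nlinarith [mul_le_mul_of_nonneg_left h1 (show (0:ℝ) ≤ 2^m by positivity)]
  have hxhi : x ≤ 1 := by
    rw [hx, div_le_one hQ]
    have : (2:ℝ)^(n+1) = 2 * 2^n := by ring
    nlinarith [mul_pos (show (0:ℝ) < 2^n by positivity) ht0]
  rw [g₁_iter_high m x hxlo hxhi]
  -- final algebra
  have hDm : 0 < (2 - (2:ℝ)^(m+1)) * x + 2^(m+1) - 1 := by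
    have : (2:ℝ)^(m+1) = 2 * 2^m := by ring
    nlinarith
  have hDs : 0 < ((N:ℝ) + 4) * s - 1 := by
    have := hslo
    rw [div_le_iff₀ (by positivity)] at this
    nlinarith
  rw [div_eq_div_iff (by linarith) (by linarith), hx, hs]
  have e1 : (2:ℝ)^(m+1) = 2 * 2^m := by ring
  have e2 : (2:ℝ)^(n+1) = 2 * 2^n := by ring
  have hQ2 : ((N:ℝ) * (2^m * 2^n) + 2 * 2^m + 2 * 2^n) * t - 2^m ≠ 0 := by
    rw [hpow, e1, e2] at hQ
    exact hQ.ne'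
  rw [e1, e2, hpow]
  have hF2 : 2 * t * ((2:ℝ)^n - 1) + 1 ≠ 0 := by have := hF.ne'; ring_nf at this ⊢; exact this
  have hQ3 : t * ((2:ℝ) ^ m * ((N:ℝ) * 2 ^ n + 2) + 2 * 2 ^ n) - 2 ^ m ≠ 0 := by
    have := hQ2; ring_nf at this ⊢; exact this
  field_simp [hQ2, hF2]
  ring
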